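/- Let T > 0 and let ν : [0,T] → (C[0,1])′ be continuous in the dual norm and satisfy the integral equation ν_t(f) = ∫₀¹φ(u)f(u)du + ∫₀^t ν_s(P₁f)ds for every f ∈ C[0,1] and every t ∈ [0,T]. Then ν_t(f) = ∫₀¹ρ(t,u)f(u)du for every f ∈ C[0,1] and t ∈ [0,T]. -/

import Mathlib

open MeasureTheory Set Topology Filter

noncomputable section

/-- The unit interval `[0,1]` as a subset of `ℝ`. -/
abbrev I01 : Set ℝ := Set.Icc 0 1

lemma intI {f : I01 → ℝ} (hf : Continuous f) : Integrable f volume :=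
  hf.integrable_of_hasCompactSupport (HasCompactSupport.of_compactSpace _)

lemma intII {f : I01 × I01 → ℝ} (hf : Continuous f) :
    Integrable f ((volume : Measure I01).prod volume) :=
  hf.integrable_of_hasCompactSupport (HasCompactSupport.of_compactSpace _)

def pairL : C(I01, ℝ) →L[ℝ] C(I01, ℝ) →L[ℝ] ℝ :=
  LinearMap.mkContinuous₂
    (LinearMap.mk₂ ℝ (fun g f => ∫ u : I01, g u * f u)
      (fun g₁ g₂ f => by
        simp only [ContinuousMap.add_apply, add_mul]
        exact integral_add (intI (by fun_prop)) (intI (by fun_prop)))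
      (fun r g f => by
        simp only [ContinuousMap.smul_apply, smul_eq_mul, mul_assoc, MeasureTheory.integral_const_mul])
      (fun g f₁ f₂ => by
        simp only [ContinuousMap.add_apply, mul_add]
        exact integral_add (intI (by fun_prop)) (intI (by fun_prop)))
      (fun r g f => by
        simp only [ContinuousMap.smul_apply, smul_eq_mul, mul_left_comm, MeasureTheory.integral_const_mul]))
    ((volume (Set.univ : Set I01)).toReal)
    (fun g f => by
      simp only [LinearMap.mk₂_apply]
      have h : ∀ᵐ u : I01, ‖g u * f u‖ ≤ ‖g‖ * ‖f‖ := by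
        filter_upwards with u
        rw [norm_mul]
        exact mul_le_mul (g.norm_coe_le_norm u) (f.norm_coe_le_norm u) (norm_nonneg _)
          (norm_nonneg _)
      calc ‖∫ u : I01, g u * f u‖ ≤ ‖g‖ * ‖f‖ * (volume (Set.univ : Set I01)).toReal :=
            norm_integral_le_of_norm_le_const h
        _ = (volume (Set.univ : Set I01)).toReal * ‖g‖ * ‖f‖ := by ring)

@[simp] lemma pairL_apply (g f : C(I01, ℝ)) : pairL g f = ∫ u : I01, g u * f u := rfl

lemma adjoint_key (b c : C(I01, ℝ)) (lam a1 a2 a3 a4 : C(I01 × I01, ℝ))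
    (P1 P8 : C(I01, ℝ) →L[ℝ] C(I01, ℝ))
    (hP1 : ∀ (f : C(I01, ℝ)) (u : I01),
      P1 f u = b u * (c u - 1) * f u
        + f u * (∫ v : I01, lam (u, v) * (a1 (u, v) - 1))
        + (∫ v : I01, lam (u, v) * a3 (u, v) * f v)
        + f u * (∫ v : I01, lam (v, u) * (a4 (v, u) - 1))
        + (∫ v : I01, lam (v, u) * f v * a2 (v, u)))
    (hP8 : ∀ (f : C(I01, ℝ)) (u : I01),
      P8 f u = b u * (c u - 1) * f u
        + f u * (∫ v : I01, lam (v, u) * (a4 (v, u) - 1))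
        + f u * (∫ v : I01, lam (u, v) * (a1 (u, v) - 1))
        + (∫ v : I01, lam (u, v) * a2 (u, v) * f v)
        + (∫ v : I01, lam (v, u) * a3 (v, u) * f v))
    (g f : C(I01, ℝ)) :
    (∫ u : I01, g u * P1 f u) = ∫ u : I01, P8 g u * f u := by
  set pm : Measure (I01 × I01) := (volume : Measure I01).prod volume with hpm
  set Gs : I01 × I01 → ℝ := fun p =>
    g p.1 * f p.1 * (lam p * (a1 p - 1))
    + g p.1 * f p.1 * (lam (p.2, p.1) * (a4 (p.2, p.1) - 1)) with hGs
  set Gw : I01 × I01 → ℝ := fun p =>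
    g p.1 * (lam p * a3 p * f p.2) + g p.1 * (lam (p.2, p.1) * f p.2 * a2 (p.2, p.1)) with hGw
  set Hw : I01 × I01 → ℝ := fun p =>
    f p.1 * (lam p * a2 p * g p.2) + f p.1 * (lam (p.2, p.1) * a3 (p.2, p.1) * g p.2) with hHw
  have contGs : Continuous Gs := by rw [hGs]; fun_prop
  have contGw : Continuous Gw := by rw [hGw]; fun_prop
  have contHw : Continuous Hw := by rw [hHw]; fun_prop
  have hI1 : Integrable (fun u : I01 => b u * (c u - 1) * g u * f u) volume :=
    intI (by fun_prop)
  have hIGs : Integrable (fun u : I01 => ∫ v : I01, Gs (u, v)) volume :=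
    (intII contGs).integral_prod_left
  have hIGw : Integrable (fun u : I01 => ∫ v : I01, Gw (u, v)) volume :=
    (intII contGw).integral_prod_left
  have hIHw : Integrable (fun u : I01 => ∫ v : I01, Hw (u, v)) volume :=
    (intII contHw).integral_prod_left
  have innerGs : ∀ u : I01, (∫ v : I01, Gs (u, v)) =
      g u * f u * (∫ v : I01, lam (u, v) * (a1 (u, v) - 1))
      + g u * f u * (∫ v : I01, lam (v, u) * (a4 (v, u) - 1)) := by
    intro u
    rw [show (fun v : I01 => Gs (u, v)) = fun v : I01 =>
        g u * f u * (lam (u, v) * (a1 (u, v) - 1))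
        + g u * f u * (lam (v, u) * (a4 (v, u) - 1)) from rfl]
    rw [integral_add (intI (by fun_prop)) (intI (by fun_prop)),
      MeasureTheory.integral_const_mul, MeasureTheory.integral_const_mul]
  have innerGw : ∀ u : I01, (∫ v : I01, Gw (u, v)) =
      g u * (∫ v : I01, lam (u, v) * a3 (u, v) * f v)
      + g u * (∫ v : I01, lam (v, u) * f v * a2 (v, u)) := by
    intro u
    rw [show (fun v : I01 => Gw (u, v)) = fun v : I01 =>
        g u * (lam (u, v) * a3 (u, v) * f v) + g u * (lam (v, u) * f v * a2 (v, u)) from rfl]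
    rw [integral_add (intI (by fun_prop)) (intI (by fun_prop)),
      MeasureTheory.integral_const_mul, MeasureTheory.integral_const_mul]
  have innerHw : ∀ u : I01, (∫ v : I01, Hw (u, v)) =
      f u * (∫ v : I01, lam (u, v) * a2 (u, v) * g v)
      + f u * (∫ v : I01, lam (v, u) * a3 (v, u) * g v) := by
    intro u
    rw [show (fun v : I01 => Hw (u, v)) = fun v : I01 =>
        f u * (lam (u, v) * a2 (u, v) * g v) + f u * (lam (v, u) * a3 (v, u) * g v) from rfl]
    rw [integral_add (intI (by fun_prop)) (intI (by fun_prop)),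
      MeasureTheory.integral_const_mul, MeasureTheory.integral_const_mul]
  have lhs_eq : (∫ u : I01, g u * P1 f u) =
      (∫ u : I01, b u * (c u - 1) * g u * f u)
      + (∫ p, Gs p ∂pm) + (∫ p, Gw p ∂pm) := by
    calc (∫ u : I01, g u * P1 f u)
        = ∫ u : I01, (b u * (c u - 1) * g u * f u
            + (∫ v : I01, Gs (u, v)) + (∫ v : I01, Gw (u, v))) := by
          refine integral_congr_ae (Filter.Eventually.of_forall fun u => ?_)
          simp only [hP1]
          rw [innerGs u, innerGw u]; ring
      _ = (∫ u : I01, (b u * (c u - 1) * g u * f u + ∫ v : I01, Gs (u, v)))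
            + ∫ u : I01, ∫ v : I01, Gw (u, v) := integral_add (hI1.add hIGs) hIGw
      _ = (∫ u : I01, b u * (c u - 1) * g u * f u) + (∫ u : I01, ∫ v : I01, Gs (u, v))
            + ∫ u : I01, ∫ v : I01, Gw (u, v) := by rw [integral_add hI1 hIGs]
      _ = (∫ u : I01, b u * (c u - 1) * g u * f u)
            + (∫ p, Gs p ∂pm) + (∫ p, Gw p ∂pm) := by
          rw [show (∫ u : I01, ∫ v : I01, Gs (u, v)) = ∫ p, Gs p ∂pm from
              integral_integral (intII contGs),
            show (∫ u : I01, ∫ v : I01, Gw (u, v)) = ∫ p, Gw p ∂pm from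
              integral_integral (intII contGw)]
  have rhs_eq : (∫ u : I01, P8 g u * f u) =
      (∫ u : I01, b u * (c u - 1) * g u * f u)
      + (∫ p, Gs p ∂pm) + (∫ p, Hw p ∂pm) := by
    calc (∫ u : I01, P8 g u * f u)
        = ∫ u : I01, (b u * (c u - 1) * g u * f u
            + (∫ v : I01, Gs (u, v)) + (∫ v : I01, Hw (u, v))) := by
          refine integral_congr_ae (Filter.Eventually.of_forall fun u => ?_)
          simp only [hP8]
          rw [innerGs u, innerHw u]; ring
      _ = (∫ u : I01, (b u * (c u - 1) * g u * f u + ∫ v : I01, Gs (u, v)))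
            + ∫ u : I01, ∫ v : I01, Hw (u, v) := integral_add (hI1.add hIGs) hIHw
      _ = (∫ u : I01, b u * (c u - 1) * g u * f u) + (∫ u : I01, ∫ v : I01, Gs (u, v))
            + ∫ u : I01, ∫ v : I01, Hw (u, v) := by rw [integral_add hI1 hIGs]
      _ = (∫ u : I01, b u * (c u - 1) * g u * f u)
            + (∫ p, Gs p ∂pm) + (∫ p, Hw p ∂pm) := by
          rw [show (∫ u : I01, ∫ v : I01, Gs (u, v)) = ∫ p, Gs p ∂pm from
              integral_integral (intII contGs),
            show (∫ u : I01, ∫ v : I01, Hw (u, v)) = ∫ p, Hw p ∂pm from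
              integral_integral (intII contHw)]
  have hsw : (∫ p, Hw p ∂pm) = ∫ p, Gw p ∂pm := by
    calc (∫ p, Hw p ∂pm) = ∫ p, Gw p.swap ∂pm := by
          refine integral_congr_ae (Filter.Eventually.of_forall fun p => ?_)
          simp only [hHw, hGw, Prod.fst_swap, Prod.snd_swap, Prod.swap]
          ring
      _ = ∫ p, Gw p ∂pm := integral_prod_swap Gw
  rw [lhs_eq, rhs_eq, hsw]

theorem stmt4'
    (φ : C(I01, ℝ)) (T : ℝ) (hT : 0 < T)
    (P1 P8 : C(I01, ℝ) →L[ℝ] C(I01, ℝ))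
    (key : ∀ g f : C(I01, ℝ), pairL g (P1 f) = pairL (P8 g) f)
    (ρ : ℝ → C(I01, ℝ)) (hρinit : ρ 0 = φ)
    (hρ : ∀ t ∈ Set.Ici (0 : ℝ), HasDerivWithinAt ρ (P8 (ρ t)) (Set.Ici 0) t)
    (ν : ℝ → (C(I01, ℝ) →L[ℝ] ℝ))
    (hνcont : ContinuousOn ν (Set.Icc 0 T))
    (hνeq : ∀ f : C(I01, ℝ), ∀ t ∈ Set.Icc (0 : ℝ) T,
      ν t f = (∫ u : I01, φ u * f u) + ∫ s in (0 : ℝ)..t, ν s (P1 f)) :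
    ∀ t ∈ Set.Icc (0 : ℝ) T, ∀ f : C(I01, ℝ),
      ν t f = ∫ u : I01, ρ t u * f u := by
  have hρcont : ContinuousOn ρ (Ici 0) := fun t ht => (hρ t ht).continuousWithinAt
  have hIccIci : Icc (0:ℝ) T ⊆ Ici 0 := fun x hx => hx.1
  -- FTC for ρ
  have hFTC : ∀ f : C(I01, ℝ), ∀ t ∈ Icc (0:ℝ) T,
      (∫ s in (0:ℝ)..t, pairL (ρ s) (P1 f)) = pairL (ρ t) f - pairL φ f := by
    intro f t ht
    have h0t : (0:ℝ) ≤ t := ht.1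
    have hsub : Icc (0:ℝ) t ⊆ Ici 0 := fun x hx => hx.1
    have hcont : ContinuousOn (fun s => pairL (ρ s) f) (Icc 0 t) :=
      (pairL.flip f).continuous.comp_continuousOn (hρcont.mono hsub)
    have hderiv : ∀ x ∈ Ioo (0:ℝ) t,
        HasDerivWithinAt (fun s => pairL (ρ s) f) (pairL (ρ x) (P1 f)) (Ioi x) x := by
      intro x hx
      have h := (pairL.flip f).hasFDerivAt.comp_hasDerivWithinAt x (hρ x (le_of_lt hx.1))
      have h2 := h.mono (fun y (hy : y ∈ Ioi x) => le_of_lt (lt_trans hx.1 hy))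
      have h3 : (pairL.flip f) (P8 (ρ x)) = pairL (ρ x) (P1 f) := by
        simp only [ContinuousLinearMap.flip_apply]
        exact (key (ρ x) f).symm
      rw [h3] at h2
      exact h2
    have hint : IntervalIntegrable (fun s => pairL (ρ s) (P1 f)) volume 0 t := by
      apply ContinuousOn.intervalIntegrable
      rw [uIcc_of_le h0t]
      exact (pairL.flip (P1 f)).continuous.comp_continuousOn (hρcont.mono hsub)
    rw [intervalIntegral.integral_eq_sub_of_hasDeriv_right_of_le h0t hcont hderiv hint, hρinit]
  set μf : ℝ → (C(I01,ℝ) →L[ℝ] ℝ) := fun t => ν t - pairL (ρ t) with hμf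
  have hμcont : ContinuousOn μf (Icc 0 T) :=
    hνcont.sub (pairL.continuous.comp_continuousOn (hρcont.mono hIccIci))
  have hμeq : ∀ f : C(I01, ℝ), ∀ t ∈ Icc (0:ℝ) T,
      μf t f = ∫ s in (0:ℝ)..t, μf s (P1 f) := by
    intro f t ht
    have h0t : (0:ℝ) ≤ t := ht.1
    have hsubT : Icc (0:ℝ) t ⊆ Icc 0 T := Icc_subset_Icc le_rfl ht.2
    have i1 : IntervalIntegrable (fun s => ν s (P1 f)) volume 0 t := by
      apply ContinuousOn.intervalIntegrable
      rw [uIcc_of_le h0t]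
      exact ((ContinuousLinearMap.apply ℝ ℝ (P1 f)).continuous.comp_continuousOn
        (hνcont.mono hsubT))
    have i2 : IntervalIntegrable (fun s => pairL (ρ s) (P1 f)) volume 0 t := by
      apply ContinuousOn.intervalIntegrable
      rw [uIcc_of_le h0t]
      exact (pairL.flip (P1 f)).continuous.comp_continuousOn
        (hρcont.mono fun x hx => (hsubT hx).1)
    have e1 : μf t f = (∫ s in (0:ℝ)..t, ν s (P1 f)) - ∫ s in (0:ℝ)..t, pairL (ρ s) (P1 f) := by
      have hν := hνeq f t ht
      have hF := hFTC f t ht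
      have hφ : pairL φ f = ∫ u : I01, φ u * f u := pairL_apply φ f
      simp only [hμf, ContinuousLinearMap.sub_apply]
      rw [hν, hF] ; rw [hφ]; ring
    rw [e1, ← intervalIntegral.integral_sub i1 i2]
    rfl
  have hnormcont : ContinuousOn (fun s => ‖μf s‖) (Icc 0 T) := ContinuousOn.norm (E := C(I01,ℝ) →L[ℝ] ℝ) hμcont
  have hbound : ∀ t ∈ Icc (0:ℝ) T, ‖μf t‖ ≤ ‖P1‖ * ∫ s in (0:ℝ)..t, ‖μf s‖ := by
    intro t ht
    have h0t : (0:ℝ) ≤ t := ht.1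
    have hsubT : Icc (0:ℝ) t ⊆ Icc 0 T := Icc_subset_Icc le_rfl ht.2
    have hN : IntervalIntegrable (fun s => ‖μf s‖) volume 0 t := by
      apply ContinuousOn.intervalIntegrable
      rw [uIcc_of_le h0t]
      exact hnormcont.mono hsubT
    have hInonneg : 0 ≤ ∫ s in (0:ℝ)..t, ‖μf s‖ :=
      intervalIntegral.integral_nonneg h0t (fun u _ => norm_nonneg (E := C(I01,ℝ) →L[ℝ] ℝ) _)
    refine ContinuousLinearMap.opNorm_le_bound _ (mul_nonneg (norm_nonneg (E := C(I01,ℝ) →L[ℝ] C(I01,ℝ)) _) hInonneg) fun f => ?_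
    rw [hμeq f t ht]
    have hNP : IntervalIntegrable (fun s => μf s (P1 f)) volume 0 t := by
      apply ContinuousOn.intervalIntegrable
      rw [uIcc_of_le h0t]
      exact ((ContinuousLinearMap.apply ℝ ℝ (P1 f)).continuous.comp_continuousOn
        (hμcont.mono hsubT))
    calc ‖∫ s in (0:ℝ)..t, μf s (P1 f)‖
        ≤ ∫ s in (0:ℝ)..t, ‖μf s (P1 f)‖ :=
          intervalIntegral.norm_integral_le_integral_norm h0t
      _ ≤ ∫ s in (0:ℝ)..t, (‖P1‖ * ‖f‖) * ‖μf s‖ := by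
          refine intervalIntegral.integral_mono_on h0t hNP.norm (hN.const_mul _) fun x _ => ?_
          calc ‖μf x (P1 f)‖ ≤ ‖μf x‖ * ‖P1 f‖ := (μf x).le_opNorm (P1 f)
            _ ≤ ‖μf x‖ * (‖P1‖ * ‖f‖) :=
                mul_le_mul_of_nonneg_left (P1.le_opNorm f)
                  (norm_nonneg (E := C(I01,ℝ) →L[ℝ] ℝ) _)
            _ = (‖P1‖ * ‖f‖) * ‖μf x‖ := by ring
      _ = (‖P1‖ * ‖f‖) * ∫ s in (0:ℝ)..t, ‖μf s‖ := intervalIntegral.integral_const_mul _ _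
      _ = ‖P1‖ * (∫ s in (0:ℝ)..t, ‖μf s‖) * ‖f‖ := by ring
  set gI : ℝ → ℝ := fun t => ∫ s in (0:ℝ)..t, ‖μf s‖ with hgI
  have hgnonneg : ∀ x ∈ Icc (0:ℝ) T, 0 ≤ gI x := fun x hx =>
    intervalIntegral.integral_nonneg hx.1 (fun u _ => norm_nonneg (E := C(I01,ℝ) →L[ℝ] ℝ) _)
  have hIIcc : IntegrableOn (fun s => ‖μf s‖) (Icc 0 T) volume :=
    hnormcont.integrableOn_compact isCompact_Icc
  have hgcont : ContinuousOn gI (Icc 0 T) := by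
    have h := intervalIntegral.continuousOn_primitive_interval (a := (0:ℝ)) (b := T)
      (μ := volume) (f := fun s => ‖μf s‖) (by rw [uIcc_of_le (le_of_lt hT)]; exact hIIcc)
    rwa [uIcc_of_le (le_of_lt hT)] at h
  have hgderiv : ∀ t ∈ Ico (0:ℝ) T, HasDerivWithinAt gI (‖μf t‖) (Ici t) t := by
    intro t ht
    have hint : IntervalIntegrable (fun s => ‖μf s‖) volume 0 t := by
      apply ContinuousOn.intervalIntegrable
      rw [uIcc_of_le ht.1]
      exact hnormcont.mono (Icc_subset_Icc le_rfl (le_of_lt ht.2))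
    have hmemIcc : Icc t T ∈ 𝓝[Ici t] t := by
      rw [← nhdsWithin_Icc_eq_nhdsGE ht.2]
      exact self_mem_nhdsWithin
    have hmeas : StronglyMeasurableAtFilter (fun s => ‖μf s‖) (𝓝[Ioi t] t) volume :=
      ⟨Icc t T, nhdsWithin_mono t Ioi_subset_Ici_self hmemIcc,
        (hnormcont.mono (Icc_subset_Icc ht.1 le_rfl)).aestronglyMeasurable measurableSet_Icc⟩
    have hcw : ContinuousWithinAt (fun s => ‖μf s‖) (Ioi t) t := by
      refine ContinuousWithinAt.mono ?_ Ioi_subset_Ici_self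
      rw [← continuousWithinAt_Icc_iff_Ici ht.2]
      exact (hnormcont t ⟨ht.1, le_of_lt ht.2⟩).mono (Icc_subset_Icc ht.1 le_rfl)
    exact intervalIntegral.integral_hasDerivWithinAt_right hint hmeas hcw
  have hgr := norm_le_gronwallBound_of_norm_deriv_right_le (δ := 0) (ε := 0) (K := ‖P1‖)
    hgcont hgderiv (by simp [hgI]) (fun x hx => by
      have hx' : x ∈ Icc (0:ℝ) T := ⟨hx.1, le_of_lt hx.2⟩
      rw [Real.norm_of_nonneg (norm_nonneg (E := C(I01,ℝ) →L[ℝ] ℝ) _),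
        Real.norm_of_nonneg (hgnonneg x hx'), add_zero]
      exact hbound x hx')
  intro t ht f
  have hg0 : gI t = 0 := by
    refine le_antisymm ?_ (hgnonneg t ht)
    have h := hgr t ht
    rwa [gronwallBound_ε0_δ0, Real.norm_of_nonneg (hgnonneg t ht)] at h
  have hμ0 : μf t = 0 := by
    have h := hbound t ht
    rw [show (∫ s in (0:ℝ)..t, ‖μf s‖) = gI t from rfl, hg0, mul_zero] at h
    exact (ContinuousLinearMap.opNorm_zero_iff _).mp (le_antisymm h (norm_nonneg _))
  have hsub : ν t - pairL (ρ t) = 0 := hμ0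
  have : ν t = pairL (ρ t) := sub_eq_zero.mp hsub
  rw [show ν t f = pairL (ρ t) f from by rw [this], pairL_apply]

/-- if `ν : [0,T] → (C[0,1])′` is norm-continuous and satisfies the integral
equation `ν_t(f) = ∫₀¹ φ f + ∫₀^t ν_s(P₁f) ds`, then `ν_t(f) = ∫₀¹ ρ(t,u) f(u) du`. -/
theorem stmt4
    (b c : C(I01, ℝ)) (lam a1 a2 a3 a4 : C(I01 × I01, ℝ))
    (hb : ∀ u, 0 ≤ b u) (hc : ∀ u, 0 ≤ c u)
    (hlam : ∀ p, 0 ≤ lam p) (ha1 : ∀ p, 0 ≤ a1 p) (ha2 : ∀ p, 0 ≤ a2 p)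
    (ha3 : ∀ p, 0 ≤ a3 p) (ha4 : ∀ p, 0 ≤ a4 p)
    (φ : C(I01, ℝ)) (T : ℝ) (hT : 0 < T)
    (P1 : C(I01, ℝ) →L[ℝ] C(I01, ℝ))
    (hP1 : ∀ (f : C(I01, ℝ)) (u : I01),
      P1 f u = b u * (c u - 1) * f u
        + f u * (∫ v : I01, lam (u, v) * (a1 (u, v) - 1))
        + (∫ v : I01, lam (u, v) * a3 (u, v) * f v)
        + f u * (∫ v : I01, lam (v, u) * (a4 (v, u) - 1))
        + (∫ v : I01, lam (v, u) * f v * a2 (v, u)))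
    (P8 : C(I01, ℝ) →L[ℝ] C(I01, ℝ))
    (hP8 : ∀ (f : C(I01, ℝ)) (u : I01),
      P8 f u = b u * (c u - 1) * f u
        + f u * (∫ v : I01, lam (v, u) * (a4 (v, u) - 1))
        + f u * (∫ v : I01, lam (u, v) * (a1 (u, v) - 1))
        + (∫ v : I01, lam (u, v) * a2 (u, v) * f v)
        + (∫ v : I01, lam (v, u) * a3 (v, u) * f v))
    (ρ : ℝ → C(I01, ℝ)) (hρinit : ρ 0 = φ)
    (hρ : ∀ t ∈ Set.Ici (0 : ℝ), HasDerivWithinAt ρ (P8 (ρ t)) (Set.Ici 0) t)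
    (ν : ℝ → (C(I01, ℝ) →L[ℝ] ℝ))
    (hνcont : ContinuousOn ν (Set.Icc 0 T))
    (hνeq : ∀ f : C(I01, ℝ), ∀ t ∈ Set.Icc (0 : ℝ) T,
      ν t f = (∫ u : I01, φ u * f u) + ∫ s in (0 : ℝ)..t, ν s (P1 f)) :
    ∀ t ∈ Set.Icc (0 : ℝ) T, ∀ f : C(I01, ℝ),
      ν t f = ∫ u : I01, ρ t u * f u := by
  refine stmt4' φ T hT P1 P8 (fun g f => ?_) ρ hρinit hρ ν hνcont hνeq
  rw [pairL_apply, pairL_apply]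
  exact adjoint_key b c lam a1 a2 a3 a4 P1 P8 hP1 hP8 g f
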